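/- arXiv:1012.2287 — 2 statements merged into one kernel-verified Lean document; each statement's English description precedes it below -/
import Mathlib

section
/- Let 1 ≤ p < 2 < q < ∞ and let α ∈ (0,1) satisfy 1/2 = α/p + (1-α)/q. There is a constant C = C(p,q) such that for every ω ∈ L^p(ℝ²) ∩ L^q(ℝ²) and every x ∈ ℝ², the integral ∫_{ℝ²} ‖K(x-y)‖ |ω(y)| dy converges and is bounded by C ‖ω‖_{L^p}^{α} ‖ω‖_{L^q}^{1-α}; in particular the Biot–Savart velocity v = K ∗ ω satisfies ‖v‖_{L^∞(ℝ²)} ≤ C ‖ω‖_{L^p}^{α} ‖ω‖_{L^q}^{1-α}. -/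
open MeasureTheory Real ENNReal

/-- The 2D Biot–Savart kernel `K(x) = (1/(2π)) x^⊥ / ‖x‖²`, where `x^⊥ = (-x₂, x₁)`. -/
noncomputable def biotSavartKernel (x : EuclideanSpace ℝ (Fin 2)) : EuclideanSpace ℝ (Fin 2) :=
  (2 * π * ‖x‖ ^ 2)⁻¹ • (WithLp.equiv 2 (Fin 2 → ℝ)).symm ![-(x 1), x 0]

set_option maxHeartbeats 1000000

open Set Metric Measure

local notation "E2" => EuclideanSpace ℝ (Fin 2)

lemma norm_biotSavartKernel (x : EuclideanSpace ℝ (Fin 2)) :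
    ‖biotSavartKernel x‖ = (2 * π)⁻¹ * ‖x‖⁻¹ := by
  have hv : ‖(WithLp.equiv 2 (Fin 2 → ℝ)).symm ![-(x 1), x 0]‖ = ‖x‖ := by
    rw [EuclideanSpace.norm_eq, EuclideanSpace.norm_eq]
    simp [Fin.sum_univ_two, add_comm]
  rcases eq_or_ne x 0 with rfl | hx
  · simp [biotSavartKernel]
  · have hnx : ‖x‖ ≠ 0 := norm_ne_zero_iff.2 hx
    rw [biotSavartKernel, norm_smul, hv, Real.norm_eq_abs,
      abs_of_nonneg (by positivity)]
    field_simp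

lemma lintegral_fun_norm_e2 (f : ℝ → ℝ≥0∞) (hf : Measurable f) :
    ∫⁻ x : E2, f ‖x‖ = 2 * volume (ball (0:E2) 1) * ∫⁻ y in Ioi (0:ℝ), ENNReal.ofReal y * f y := by
  have hm : Measurable fun z : sphere (0:E2) 1 × Ioi (0:ℝ) => f z.2 :=
    hf.comp (measurable_subtype_coe.comp measurable_snd)
  calc ∫⁻ x : E2, f ‖x‖
      = ∫⁻ x : ({(0:E2)}ᶜ : Set E2), f ‖x.1‖ ∂((volume : Measure E2).comap (↑)) := by
        rw [lintegral_subtype_comap (measurableSet_singleton _).compl fun x => f ‖x‖,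
          MeasureTheory.restrict_compl_singleton]
    _ = ∫⁻ x : sphere (0:E2) 1 × Ioi (0:ℝ), f x.2
          ∂((volume : Measure E2).toSphere.prod (Measure.volumeIoiPow (Module.finrank ℝ E2 - 1))) := by
        rw [← ((volume : Measure E2).measurePreserving_homeomorphUnitSphereProd).lintegral_comp_emb
          (Homeomorph.measurableEmbedding _) (fun x => f x.2)]; simp only [homeomorphUnitSphereProd_apply_snd_coe]
    _ = 2 * volume (ball (0:E2) 1) * ∫⁻ y in Ioi (0:ℝ), ENNReal.ofReal y * f y := by
        rw [MeasureTheory.lintegral_prod _ hm.aemeasurable]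
        simp only [lintegral_const, Measure.volumeIoiPow]
        rw [lintegral_withDensity_eq_lintegral_mul _ (by fun_prop) (g := fun y : Ioi (0:ℝ) => f ↑y) (by fun_prop)]
        simp only [Pi.mul_apply]
        rw [lintegral_subtype_comap measurableSet_Ioi
          (fun a : ℝ => ENNReal.ofReal (a ^ (Module.finrank ℝ E2 - 1)) * f a),
          Measure.toSphere_apply_univ]
        have h2 : Module.finrank ℝ E2 = 2 := finrank_euclideanSpace_fin
        rw [h2]
        ring_nf

lemma lintegral_ball_rpow {s R : ℝ} (hs0 : 0 < s) (hs2 : s < 2) (hR : 0 < R) :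
    ∫⁻ z in ball (0:E2) R, ENNReal.ofReal (‖z‖ ^ (-s)) =
      2 * volume (ball (0:E2) 1) * ENNReal.ofReal (R ^ (2-s) / (2-s)) := by
  have hmeas : Measurable fun t : ℝ => ENNReal.ofReal (t ^ (-s)) := by fun_prop
  set f : ℝ → ℝ≥0∞ := fun t => Set.indicator (Iio R) (fun t => ENNReal.ofReal (t ^ (-s))) t with hfdef
  have hf : Measurable f := hmeas.indicator measurableSet_Iio
  have h1 : ∫⁻ z in ball (0:E2) R, ENNReal.ofReal (‖z‖ ^ (-s)) = ∫⁻ z : E2, f ‖z‖ := by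
    rw [← lintegral_indicator measurableSet_ball]
    refine lintegral_congr fun z => ?_
    by_cases h : z ∈ ball (0:E2) R
    · simp [hfdef, Set.indicator_apply, mem_ball_zero_iff.1 h, h]
    · have h' : ¬ ‖z‖ < R := fun hc => h (mem_ball_zero_iff.2 hc)
      simp [hfdef, Set.indicator_apply, h, h']
  rw [h1, lintegral_fun_norm_e2 f hf]
  congr 1
  have h2 : ∀ y : ℝ, ENNReal.ofReal y * f y =
      Set.indicator (Iio R) (fun y => ENNReal.ofReal y * ENNReal.ofReal (y ^ (-s))) y := by
    intro y
    by_cases h : y ∈ Iio R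
    · simp [hfdef, Set.indicator_of_mem h]
    · simp [hfdef, Set.indicator_of_notMem h]
  rw [lintegral_congr h2, setLIntegral_indicator measurableSet_Iio,
    show Iio R ∩ Ioi (0:ℝ) = Ioo 0 R by rw [Set.inter_comm, Set.Ioi_inter_Iio]]
  have h3 : ∫⁻ y in Ioo (0:ℝ) R, ENNReal.ofReal y * ENNReal.ofReal (y ^ (-s)) =
      ∫⁻ y in Ioo (0:ℝ) R, ENNReal.ofReal (y ^ (1-s)) := by
    refine setLIntegral_congr_fun measurableSet_Ioo (fun y hy => ?_)
    rw [← ENNReal.ofReal_mul hy.1.le,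
      show (1:ℝ) - s = 1 + (-s) by ring, Real.rpow_add hy.1, Real.rpow_one]
  have hint : IntegrableOn (fun y : ℝ => y ^ (1-s)) (Ioo 0 R) :=
    (intervalIntegral.intervalIntegrable_rpow' (by linarith : (-1:ℝ) < 1 - s)).1.mono_set
      Ioo_subset_Ioc_self
  rw [h3, ← ofReal_integral_eq_lintegral_ofReal hint ?pos]
  case pos =>
    filter_upwards [ae_restrict_mem measurableSet_Ioo] with y hy
    exact Real.rpow_nonneg hy.1.le _
  congr 1
  rw [← integral_Ioc_eq_integral_Ioo, ← intervalIntegral.integral_of_le hR.le,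
    integral_rpow (Or.inl (by linarith))]
  rw [Real.zero_rpow (by linarith : (1:ℝ) - s + 1 ≠ 0)]
  norm_num
  ring_nf

lemma lintegral_compl_ball_rpow {s R : ℝ} (hs2 : 2 < s) (hR : 0 < R) :
    ∫⁻ z in (ball (0:E2) R)ᶜ, ENNReal.ofReal (‖z‖ ^ (-s)) =
      2 * volume (ball (0:E2) 1) * ENNReal.ofReal (R ^ (2-s) / (s-2)) := by
  have hmeas : Measurable fun t : ℝ => ENNReal.ofReal (t ^ (-s)) := by fun_prop
  set f : ℝ → ℝ≥0∞ := fun t => Set.indicator (Ici R) (fun t => ENNReal.ofReal (t ^ (-s))) t with hfdef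
  have hf : Measurable f := hmeas.indicator measurableSet_Ici
  have h1 : ∫⁻ z in (ball (0:E2) R)ᶜ, ENNReal.ofReal (‖z‖ ^ (-s)) = ∫⁻ z : E2, f ‖z‖ := by
    rw [← lintegral_indicator measurableSet_ball.compl]
    refine lintegral_congr fun z => ?_
    by_cases h : z ∈ (ball (0:E2) R)ᶜ
    · have h' : R ≤ ‖z‖ := not_lt.1 fun hc => h (mem_ball_zero_iff.2 hc)
      simp [hfdef, Set.indicator_apply, h, h']
    · have h' : ¬ R ≤ ‖z‖ := by
        simp only [mem_compl_iff, not_not] at h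
        exact not_le.2 (mem_ball_zero_iff.1 h)
      simp [hfdef, Set.indicator_apply, h, h']
  rw [h1, lintegral_fun_norm_e2 f hf]
  congr 1
  have h2 : ∀ y : ℝ, ENNReal.ofReal y * f y =
      Set.indicator (Ici R) (fun y => ENNReal.ofReal y * ENNReal.ofReal (y ^ (-s))) y := by
    intro y
    by_cases h : y ∈ Ici R
    · simp [hfdef, Set.indicator_of_mem h]
    · simp [hfdef, Set.indicator_of_notMem h]
  rw [lintegral_congr h2, setLIntegral_indicator measurableSet_Ici]
  rw [show Ici R ∩ Ioi (0:ℝ) = Ici R from Set.inter_eq_left.2 fun y hy => Set.mem_Ioi.2 (hR.trans_le hy)]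
  rw [Measure.restrict_congr_set Ioi_ae_eq_Ici.symm]
  have h3 : ∫⁻ y in Ioi R, ENNReal.ofReal y * ENNReal.ofReal (y ^ (-s)) =
      ∫⁻ y in Ioi R, ENNReal.ofReal (y ^ (1-s)) := by
    refine setLIntegral_congr_fun measurableSet_Ioi (fun y hy => ?_)
    have hy0 : (0:ℝ) < y := hR.trans hy
    rw [← ENNReal.ofReal_mul hy0.le,
      show (1:ℝ) - s = 1 + (-s) by ring, Real.rpow_add hy0, Real.rpow_one]
  have hint : IntegrableOn (fun y : ℝ => y ^ (1-s)) (Ioi R) :=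
    integrableOn_Ioi_rpow_of_lt (by linarith) hR
  rw [h3, ← ofReal_integral_eq_lintegral_ofReal hint ?pos]
  case pos =>
    filter_upwards [ae_restrict_mem measurableSet_Ioi] with y hy
    exact Real.rpow_nonneg (hR.trans hy).le _
  rw [integral_Ioi_rpow_of_lt (by linarith) hR]
  congr 1
  have h4 : (1:ℝ) - s + 1 = 2 - s := by ring
  have hne : (2:ℝ) - s ≠ 0 := by linarith
  have hne' : s - 2 ≠ 0 := by linarith
  rw [h4]
  field_simp
  ring

lemma preimage_sub_ball (x : E2) (R : ℝ) :
    (fun y : E2 => x - y) ⁻¹' (ball 0 R) = ball x R := by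
  ext y
  simp only [Set.mem_preimage, mem_ball_zero_iff, mem_ball, dist_eq_norm]
  rw [sub_zero, norm_sub_rev]

lemma kernel_factor (x : E2) {s : ℝ} (hs0 : 0 < s) (S : Set E2) :
    ∫⁻ y in (fun y : E2 => x - y) ⁻¹' S, ENNReal.ofReal ((2*π)⁻¹ * ‖x - y‖⁻¹) ^ s
      = ENNReal.ofReal ((2*π)⁻¹ ^ s) * ∫⁻ z in S, ENNReal.ofReal (‖z‖ ^ (-s)) := by
  have hptwise : ∀ y : E2, ENNReal.ofReal ((2*π)⁻¹ * ‖x - y‖⁻¹) ^ s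
      = ENNReal.ofReal ((2*π)⁻¹ ^ s) * ENNReal.ofReal (‖x - y‖ ^ (-s)) := by
    intro y
    rw [ENNReal.ofReal_rpow_of_nonneg (by positivity) hs0.le,
      Real.mul_rpow (by positivity) (by positivity),
      ENNReal.ofReal_mul (by positivity), Real.inv_rpow (norm_nonneg _),
      ← Real.rpow_neg (norm_nonneg _)]
  simp_rw [hptwise]
  rw [lintegral_const_mul' _ _ ENNReal.ofReal_ne_top]
  congr 1
  have hT : MeasurePreserving (fun y : E2 => x - y) volume volume :=
    measurePreserving_sub_left volume x
  exact hT.setLIntegral_comp_preimage_emb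
    (MeasurableEquiv.subLeft x).measurableEmbedding (fun z => ENNReal.ofReal (‖z‖ ^ (-s))) S

lemma main_core (p q α : ℝ) (hp0 : 0 < p) (hp2 : p < 2) (h2q : 2 < q)
    (hα0 : 0 < α) (hα1 : α < 1) (hαpq : 1 / 2 = α / p + (1 - α) / q)
    (cF : ℝ) (hcF : 0 < cF)
    (hfar : ∀ ω : E2 → ℝ, AEStronglyMeasurable ω volume → ∀ x : E2, ∀ R : ℝ, 0 < R →
      ∫⁻ y in (ball x R)ᶜ, ENNReal.ofReal ((2*π)⁻¹ * ‖x - y‖⁻¹) * (‖ω y‖₊ : ℝ≥0∞)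
        ≤ ENNReal.ofReal (cF * R ^ (1 - 2/p)) * eLpNorm ω (ENNReal.ofReal p) volume) :
    ∃ C > 0, ∀ ω : E2 → ℝ,
      MemLp ω (ENNReal.ofReal p) volume → MemLp ω (ENNReal.ofReal q) volume →
      ∀ x : E2,
        Integrable (fun y => ‖biotSavartKernel (x - y)‖ * |ω y|) volume ∧
        (∫ y, ‖biotSavartKernel (x - y)‖ * |ω y|) ≤
          C * (eLpNorm ω (ENNReal.ofReal p) volume).toReal ^ α *
            (eLpNorm ω (ENNReal.ofReal q) volume).toReal ^ (1 - α) ∧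
        ‖∫ y, ω y • biotSavartKernel (x - y)‖ ≤
          C * (eLpNorm ω (ENNReal.ofReal p) volume).toReal ^ α *
            (eLpNorm ω (ENNReal.ofReal q) volume).toReal ^ (1 - α) := by
  have hq0 : 0 < q := by linarith
  have hvb0 : 0 < (volume (ball (0:E2) 1)).toReal :=
    ENNReal.toReal_pos (measure_ball_pos volume 0 one_pos).ne' measure_ball_lt_top.ne
  set vb := (volume (ball (0:E2) 1)).toReal with hvb
  set q' : ℝ := q / (q - 1) with hq'def
  have hq'1 : 1 < q' := by rw [hq'def, lt_div_iff₀ (by linarith)]; linarith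
  have hq'2 : q' < 2 := by rw [hq'def, div_lt_iff₀ (by linarith)]; linarith
  have hconj : q'.HolderConjugate q := Real.holderConjugate_iff.2 ⟨hq'1, by rw [hq'def]; field_simp; ring⟩
  set a : ℝ := 1 - 2/q with ha
  set b : ℝ := 2/p - 1 with hb
  have ha0 : 0 < a := by
    have : 2/q < 1 := (div_lt_one hq0).2 h2q
    rw [ha]; linarith
  have hb0 : 0 < b := by
    have : 1 < 2/p := (one_lt_div hp0).2 hp2
    rw [hb]; linarith
  have h2q' : 0 < 2 - q' := by linarith
  set KN : ℝ := (2*π)⁻¹ ^ q' * (2 * vb) / (2 - q') with hKN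
  have hKN0 : 0 < KN := div_pos (by positivity) h2q'
  set cN : ℝ := KN ^ (1/q') with hcN
  have hcN0 : 0 < cN := Real.rpow_pos_of_pos hKN0 _
  refine ⟨cN + cF, by positivity, ?_⟩
  intro ω hmp hmq x
  have hωm : AEStronglyMeasurable ω volume := hmp.1
  set Np := eLpNorm ω (ENNReal.ofReal p) volume with hNpdef
  set Nq := eLpNorm ω (ENNReal.ofReal q) volume with hNqdef
  set Kf : E2 → ℝ≥0∞ := fun y => ENNReal.ofReal ((2*π)⁻¹ * ‖x - y‖⁻¹) with hKf
  set W : E2 → ℝ≥0∞ := fun y => (‖ω y‖₊ : ℝ≥0∞) with hW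
  have hKfm : Measurable Kf :=
    ((measurable_const.sub measurable_id).norm.inv.const_mul _).ennreal_ofReal
  have hWm : AEMeasurable W volume := hωm.enorm
  have hNp_top : Np ≠ ⊤ := hmp.eLpNorm_ne_top
  have hNq_top : Nq ≠ ⊤ := hmq.eLpNorm_ne_top
  have hqsnorm : Nq = (∫⁻ y, W y ^ q) ^ (1/q) := by
    rw [hNqdef, eLpNorm_eq_lintegral_rpow_enorm_toReal (ENNReal.ofReal_pos.2 hq0).ne'
      ENNReal.ofReal_ne_top, ENNReal.toReal_ofReal hq0.le]
    rfl
  -- near estimate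
  have hnear : ∀ R : ℝ, 0 < R →
      ∫⁻ y in ball x R, Kf y * W y ≤ ENNReal.ofReal (cN * R ^ a) * Nq := by
    intro R hR
    have h1 := ENNReal.lintegral_mul_le_Lp_mul_Lq (volume.restrict (ball x R)) hconj
      hKfm.aemeasurable hWm.restrict
    simp only [Pi.mul_apply] at h1
    refine h1.trans (mul_le_mul' (le_of_eq ?_) ?_)
    · -- kernel factor
      rw [show ball x R = (fun y : E2 => x - y) ⁻¹' (ball 0 R) from (preimage_sub_ball x R).symm,
        kernel_factor x (by linarith : (0:ℝ) < q'),
        lintegral_ball_rpow (by linarith) hq'2 hR]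
      have hvol : (2 : ℝ≥0∞) * volume (ball (0:E2) 1) = ENNReal.ofReal (2 * vb) := by
        rw [ENNReal.ofReal_mul (by norm_num), hvb, ENNReal.ofReal_toReal measure_ball_lt_top.ne]
        norm_num
      rw [hvol, ← ENNReal.ofReal_mul (by positivity), ← ENNReal.ofReal_mul (by positivity),
        ENNReal.ofReal_rpow_of_nonneg (by positivity) (by positivity)]
      congr 1
      have hX : (2*π)⁻¹ ^ q' * (2 * vb * (R ^ (2-q') / (2 - q'))) = KN * R ^ (2 - q') := by
        rw [hKN]; ring
      rw [hX, Real.mul_rpow hKN0.le (Real.rpow_nonneg hR.le _), ← Real.rpow_mul hR.le]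
      have hexp : (2 - q') * (1/q') = a := by
        rw [hq'def, ha]
        have h1 : q - 1 ≠ 0 := by linarith
        have h2 : q ≠ 0 := by linarith
        field_simp
        ring
      rw [hexp, hcN]
    · rw [hqsnorm]
      exact ENNReal.rpow_le_rpow (setLIntegral_le_lintegral _ _) (by positivity)
  -- master bound
  have hmaster : ∀ R : ℝ, 0 < R →
      ∫⁻ y, Kf y * W y ≤ ENNReal.ofReal (cN * R ^ a) * Nq + ENNReal.ofReal (cF * R ^ (-b)) * Np := by
    intro R hR
    rw [← lintegral_add_compl (fun y => Kf y * W y) (measurableSet_ball (x := x) (ε := R))]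
    have hfar' := hfar ω hωm x R hR
    have hbb : R ^ (1 - 2/p) = R ^ (-b) := by rw [hb]; ring_nf
    rw [hbb] at hfar'
    exact add_le_add (hnear R hR) hfar'
  -- total bound
  have htotal : ∫⁻ y, Kf y * W y ≤
      ENNReal.ofReal ((cN + cF) * Np.toReal ^ α * Nq.toReal ^ (1-α)) := by
    by_cases h0 : Np = 0 ∨ Nq = 0
    · have hω0 : ω =ᵐ[volume] 0 := by
        rcases h0 with h | h
        · exact (eLpNorm_eq_zero_iff hωm (ENNReal.ofReal_pos.2 hp0).ne').1 h
        · exact (eLpNorm_eq_zero_iff hωm (ENNReal.ofReal_pos.2 hq0).ne').1 h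
      have hz : (fun y => Kf y * W y) =ᵐ[volume] 0 := by
        filter_upwards [hω0] with y hy
        simp [hW, hy]
      rw [lintegral_congr_ae hz]
      simp
    · push_neg at h0
      obtain ⟨hNp0, hNq0⟩ := h0
      have hnp0 : 0 < Np.toReal := ENNReal.toReal_pos hNp0 hNp_top
      have hnq0 : 0 < Nq.toReal := ENNReal.toReal_pos hNq0 hNq_top
      set np := Np.toReal
      set nq := Nq.toReal
      set R : ℝ := (np / nq) ^ (1/(a+b)) with hRdef
      have hR0 : 0 < R := Real.rpow_pos_of_pos (div_pos hnp0 hnq0) _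
      have hab : α * (a + b) = a := by
        rw [ha, hb]
        field_simp at hαpq ⊢
        nlinarith [hαpq]
      have hab' : (1/(a+b)) * a = α := by
        rw [one_div, inv_mul_eq_div, div_eq_iff (by positivity : a + b ≠ 0)]
        linarith [hab]
      have hab'' : (1/(a+b)) * (-b) = α - 1 := by
        rw [one_div, inv_mul_eq_div, div_eq_iff (by positivity : a + b ≠ 0)]
        nlinarith [hab]
      have hA : R ^ a * nq = np ^ α * nq ^ (1-α) := by
        rw [hRdef, ← Real.rpow_mul (by positivity), hab',
          Real.div_rpow hnp0.le hnq0.le]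
        have h1 : nq ^ (1-α) = nq / nq ^ α := by
          rw [Real.rpow_sub hnq0, Real.rpow_one]
        rw [h1]
        field_simp
      have hB : R ^ (-b) * np = np ^ α * nq ^ (1-α) := by
        rw [hRdef, ← Real.rpow_mul (by positivity), hab'',
          Real.div_rpow hnp0.le hnq0.le]
        have h2 : np ^ (α-1) * np = np ^ α := by
          rw [Real.rpow_sub hnp0, Real.rpow_one]
          field_simp
        have h3 : nq ^ (α-1) = (nq ^ (1-α))⁻¹ := by
          rw [show α - 1 = -(1-α) by ring, Real.rpow_neg hnq0.le]
        rw [h3]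
        field_simp
        nlinarith [h2, Real.rpow_pos_of_pos hnq0 (1-α), Real.rpow_pos_of_pos hnp0 (α-1)]
      refine (hmaster R hR0).trans ?_
      rw [show Np = ENNReal.ofReal np from (ENNReal.ofReal_toReal hNp_top).symm,
        show Nq = ENNReal.ofReal nq from (ENNReal.ofReal_toReal hNq_top).symm,
        ← ENNReal.ofReal_mul (by positivity), ← ENNReal.ofReal_mul (by positivity),
        ← ENNReal.ofReal_add (by positivity) (by positivity)]
      refine ENNReal.ofReal_le_ofReal (le_of_eq ?_)
      rw [mul_assoc cN, hA, mul_assoc cF, hB]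
      ring
  -- conclusions
  set B : ℝ := (cN + cF) * Np.toReal ^ α * Nq.toReal ^ (1-α) with hBdef
  have hB0 : 0 ≤ B := by positivity
  have hfR : ∀ y : E2, ENNReal.ofReal (‖biotSavartKernel (x - y)‖ * |ω y|) = Kf y * W y := by
    intro y
    rw [ENNReal.ofReal_mul (norm_nonneg _), norm_biotSavartKernel]
    congr 1
    simp only [hW]
    rw [← Real.norm_eq_abs]; exact ENNReal.ofReal_eq_coe_nnreal (norm_nonneg _)
  have hmeasf : AEStronglyMeasurable (fun y => ‖biotSavartKernel (x - y)‖ * |ω y|) volume := by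
    have heq : (fun y : E2 => ‖biotSavartKernel (x - y)‖ * |ω y|)
        = fun y => ((2*π)⁻¹ * ‖x - y‖⁻¹) * |ω y| := by
      funext y; rw [norm_biotSavartKernel]
    rw [heq]
    exact (((measurable_const.sub measurable_id).norm.inv.const_mul
      _).aestronglyMeasurable).mul ((hωm.norm).congr (ae_of_all _ fun y => (Real.norm_eq_abs _)))
  have hint : Integrable (fun y => ‖biotSavartKernel (x - y)‖ * |ω y|) volume := by
    refine ⟨hmeasf, ?_⟩
    rw [hasFiniteIntegral_iff_ofReal (ae_of_all _ fun y => by positivity)]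
    calc ∫⁻ y, ENNReal.ofReal (‖biotSavartKernel (x - y)‖ * |ω y|)
        = ∫⁻ y, Kf y * W y := lintegral_congr hfR
      _ ≤ ENNReal.ofReal B := htotal
      _ < ⊤ := ENNReal.ofReal_lt_top
  have hbound : (∫ y, ‖biotSavartKernel (x - y)‖ * |ω y|) ≤ B := by
    rw [integral_eq_lintegral_of_nonneg_ae (ae_of_all _ fun y => by positivity) hmeasf]
    calc (∫⁻ y, ENNReal.ofReal (‖biotSavartKernel (x - y)‖ * |ω y|)).toReal
        = (∫⁻ y, Kf y * W y).toReal := by rw [lintegral_congr hfR]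
      _ ≤ (ENNReal.ofReal B).toReal := ENNReal.toReal_mono ENNReal.ofReal_ne_top htotal
      _ = B := ENNReal.toReal_ofReal hB0
  refine ⟨hint, hbound, ?_⟩
  calc ‖∫ y, ω y • biotSavartKernel (x - y)‖
      ≤ ∫ y, ‖ω y • biotSavartKernel (x - y)‖ := norm_integral_le_integral_norm _
    _ = ∫ y, ‖biotSavartKernel (x - y)‖ * |ω y| := by
        congr 1
        funext y
        rw [norm_smul, Real.norm_eq_abs, mul_comm]
    _ ≤ B := hbound

/-- `L^p`–`L^q` interpolation bound for the Biot–Savart velocity: if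
`1 ≤ p < 2 < q < ∞` and `1/2 = α/p + (1-α)/q`, then for `ω ∈ L^p ∩ L^q` the
integral `∫ ‖K(x-y)‖ |ω y| dy` converges and
`‖(K ∗ ω)(x)‖ ≤ C ‖ω‖_p^α ‖ω‖_q^(1-α)`. -/
theorem biotSavart_linfty_bound (p q α : ℝ) (hp : 1 ≤ p) (hp2 : p < 2) (h2q : 2 < q) (hα0 : 0 < α) (hα1 : α < 1)
    (hαpq : 1 / 2 = α / p + (1 - α) / q) :
    ∃ C > 0, ∀ ω : EuclideanSpace ℝ (Fin 2) → ℝ,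
      MemLp ω (ENNReal.ofReal p) volume → MemLp ω (ENNReal.ofReal q) volume →
      ∀ x : EuclideanSpace ℝ (Fin 2),
        Integrable (fun y => ‖biotSavartKernel (x - y)‖ * |ω y|) volume ∧
        (∫ y, ‖biotSavartKernel (x - y)‖ * |ω y|) ≤
          C * (eLpNorm ω (ENNReal.ofReal p) volume).toReal ^ α *
            (eLpNorm ω (ENNReal.ofReal q) volume).toReal ^ (1 - α) ∧
        ‖∫ y, ω y • biotSavartKernel (x - y)‖ ≤
          C * (eLpNorm ω (ENNReal.ofReal p) volume).toReal ^ α *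
            (eLpNorm ω (ENNReal.ofReal q) volume).toReal ^ (1 - α) := by
  have hp0 : 0 < p := by linarith
  rcases eq_or_lt_of_le hp with hp1 | hp1
  · -- p = 1
    subst hp1
    refine main_core 1 q α one_pos hp2 h2q hα0 hα1 hαpq (2*π)⁻¹ (by positivity) ?_
    intro ω hωm x R hR
    calc ∫⁻ y in (ball x R)ᶜ, ENNReal.ofReal ((2*π)⁻¹ * ‖x - y‖⁻¹) * (‖ω y‖₊ : ℝ≥0∞)
        ≤ ∫⁻ y in (ball x R)ᶜ, ENNReal.ofReal ((2*π)⁻¹ * R⁻¹) * (‖ω y‖₊ : ℝ≥0∞) := by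
          refine lintegral_mono_ae ?_
          filter_upwards [ae_restrict_mem measurableSet_ball.compl] with y hy
          have hdist : R ≤ ‖x - y‖ := by
            have h1 : ¬ dist y x < R := fun hc => hy (mem_ball.2 hc)
            rw [dist_eq_norm, norm_sub_rev] at h1
            linarith [not_lt.1 h1]
          have h2 : ‖x - y‖⁻¹ ≤ R⁻¹ := inv_anti₀ hR hdist
          exact mul_le_mul_left (ENNReal.ofReal_le_ofReal
            (mul_le_mul_of_nonneg_left h2 (by positivity))) _
      _ = ENNReal.ofReal ((2*π)⁻¹ * R⁻¹) * ∫⁻ y in (ball x R)ᶜ, (‖ω y‖₊ : ℝ≥0∞) :=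
          lintegral_const_mul' _ _ ENNReal.ofReal_ne_top
      _ ≤ ENNReal.ofReal ((2*π)⁻¹ * R⁻¹) * ∫⁻ y, (‖ω y‖₊ : ℝ≥0∞) :=
          mul_le_mul' le_rfl (setLIntegral_le_lintegral _ _)
      _ ≤ ENNReal.ofReal ((2*π)⁻¹ * R ^ (1 - 2/(1:ℝ))) * eLpNorm ω (ENNReal.ofReal 1) volume := by
          rw [ENNReal.ofReal_one, eLpNorm_one_eq_lintegral_enorm]
          refine mul_le_mul' (le_of_eq ?_) le_rfl
          norm_num
          rw [Real.rpow_neg_one]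
  · -- 1 < p
    have hvb0 : 0 < (volume (ball (0:EuclideanSpace ℝ (Fin 2)) 1)).toReal :=
      ENNReal.toReal_pos (measure_ball_pos volume 0 one_pos).ne' measure_ball_lt_top.ne
    set vb := (volume (ball (0:EuclideanSpace ℝ (Fin 2)) 1)).toReal with hvb
    set p' : ℝ := p / (p - 1) with hp'def
    have hp'1 : 1 < p' := by rw [hp'def, lt_div_iff₀ (by linarith)]; linarith
    have hp'2 : 2 < p' := by rw [hp'def, lt_div_iff₀ (by linarith)]; linarith
    have hconjp : p'.HolderConjugate p := Real.holderConjugate_iff.2 ⟨hp'1, by rw [hp'def]; field_simp; ring⟩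
    have hp'0 : (0:ℝ) < p' := by linarith
    have hp'm2 : 0 < p' - 2 := by linarith
    set KF : ℝ := (2*π)⁻¹ ^ p' * (2 * vb) / (p' - 2) with hKF
    have hKF0 : 0 < KF := div_pos (by positivity) hp'm2
    set cF : ℝ := KF ^ (1/p') with hcF
    refine main_core p q α hp0 hp2 h2q hα0 hα1 hαpq cF (Real.rpow_pos_of_pos hKF0 _) ?_
    intro ω hωm x R hR
    have hKfm : Measurable (fun y : EuclideanSpace ℝ (Fin 2) =>
        ENNReal.ofReal ((2*π)⁻¹ * ‖x - y‖⁻¹)) :=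
      ((measurable_const.sub measurable_id).norm.inv.const_mul _).ennreal_ofReal
    have hWm : AEMeasurable (fun y => (‖ω y‖₊ : ℝ≥0∞)) volume := hωm.enorm
    have h1 := ENNReal.lintegral_mul_le_Lp_mul_Lq (volume.restrict (ball x R)ᶜ) hconjp
      hKfm.aemeasurable hWm.restrict
    simp only [Pi.mul_apply] at h1
    refine h1.trans (mul_le_mul' (le_of_eq ?_) ?_)
    · rw [show (ball x R)ᶜ = (fun y : EuclideanSpace ℝ (Fin 2) => x - y) ⁻¹' (ball 0 R)ᶜ from by
        rw [Set.preimage_compl, preimage_sub_ball],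
        kernel_factor x hp'0, lintegral_compl_ball_rpow hp'2 hR]
      have hvol : (2 : ℝ≥0∞) * volume (ball (0:EuclideanSpace ℝ (Fin 2)) 1)
          = ENNReal.ofReal (2 * vb) := by
        rw [ENNReal.ofReal_mul (by norm_num), hvb, ENNReal.ofReal_toReal measure_ball_lt_top.ne]
        norm_num
      rw [hvol, ← ENNReal.ofReal_mul (by positivity), ← ENNReal.ofReal_mul (by positivity),
        ENNReal.ofReal_rpow_of_nonneg (by positivity) (by positivity)]
      congr 1
      have hX : (2*π)⁻¹ ^ p' * (2 * vb * (R ^ (2-p') / (p' - 2))) = KF * R ^ (2 - p') := by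
        rw [hKF]; ring
      rw [hX, Real.mul_rpow hKF0.le (Real.rpow_nonneg hR.le _), ← Real.rpow_mul hR.le]
      have hexp : (2 - p') * (1/p') = 1 - 2/p := by
        rw [hp'def]
        have h1' : p - 1 ≠ 0 := by linarith
        have h2' : p ≠ 0 := by linarith
        field_simp
        ring
      rw [hexp, hcF]
    · rw [eLpNorm_eq_lintegral_rpow_enorm_toReal (ENNReal.ofReal_pos.2 hp0).ne'
        ENNReal.ofReal_ne_top, ENNReal.toReal_ofReal hp0.le]
      exact ENNReal.rpow_le_rpow (setLIntegral_le_lintegral _ _) (by positivity)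
end

section
/- Let R > 0 and let ω ∈ L¹(ℝ²) be supported in the closed ball of radius R centered at the origin, with ∫_{ℝ²} ω(y) dy = 0. Then there is a constant C (depending on ω and R) such that for every x ∈ ℝ² with ‖x‖ > 4R, the Biot–Savart velocity satisfies ‖(K ∗ ω)(x)‖ ≤ C / ‖x‖². (The leading far-field terms are -(1/(2π))‖x‖^{-2} ∫ y^⊥ ω(y) dy and -(1/(2π)) (x^⊥/‖x‖⁴) x·∫ y ω(y) dy, both of size ‖x‖^{-2}.) -/
open MeasureTheory Real

noncomputable def bsPerp (x : EuclideanSpace ℝ (Fin 2)) : EuclideanSpace ℝ (Fin 2) :=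
  (WithLp.equiv 2 (Fin 2 → ℝ)).symm ![-(x 1), x 0]

lemma bsPerp_norm (x : EuclideanSpace ℝ (Fin 2)) : ‖bsPerp x‖ = ‖x‖ := by
  simp only [EuclideanSpace.norm_eq, bsPerp]
  congr 1
  simp [Fin.sum_univ_two]
  ring

lemma bsPerp_sub (a b : EuclideanSpace ℝ (Fin 2)) : bsPerp (a - b) = bsPerp a - bsPerp b := by
  ext i
  fin_cases i <;> simp [bsPerp] <;> ring

lemma bsPerp_meas : Measurable bsPerp := by
  apply (PiLp.continuous_toLp 2 _).measurable.comp
  apply measurable_pi_lambda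
  intro i
  fin_cases i <;> simp [bsPerp] <;> measurability

lemma bsK_def (x : EuclideanSpace ℝ (Fin 2)) :
    biotSavartKernel x = (2 * π * ‖x‖ ^ 2)⁻¹ • bsPerp x := rfl

lemma bsK_meas : Measurable biotSavartKernel := by
  have : Measurable fun x : EuclideanSpace ℝ (Fin 2) => (2 * π * ‖x‖ ^ 2)⁻¹ := by measurability
  exact this.smul bsPerp_meas

lemma bsK_norm (z : EuclideanSpace ℝ (Fin 2)) :
    ‖biotSavartKernel z‖ = (2 * π * ‖z‖ ^ 2)⁻¹ * ‖z‖ := by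
  rw [bsK_def, norm_smul, bsPerp_norm, Real.norm_eq_abs, abs_of_nonneg (by positivity)]

lemma real_inv_sq_diff (s t d : ℝ) (hs : 0 < s) (ht : 0 < t) (hd : |s - t| ≤ d) :
    |(s ^ 2)⁻¹ - (t ^ 2)⁻¹| * t ≤ d * (s + t) / (s ^ 2 * t) := by
  have h1 : (s ^ 2)⁻¹ - (t ^ 2)⁻¹ = (t ^ 2 - s ^ 2) / (s ^ 2 * t ^ 2) := by
    field_simp
  rw [h1, abs_div, abs_of_pos (by positivity : (0:ℝ) < s ^ 2 * t ^ 2)]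
  have h2 : |t ^ 2 - s ^ 2| ≤ d * (s + t) := by
    have heq : t ^ 2 - s ^ 2 = (t - s) * (t + s) := by ring
    rw [heq, abs_mul, abs_of_pos (by positivity : (0:ℝ) < t + s)]
    have h3 : |t - s| ≤ d := by rwa [abs_sub_comm]
    nlinarith [abs_nonneg (t - s)]
  rw [div_mul_eq_mul_div, div_le_div_iff₀ (by positivity) (by positivity)]
  nlinarith [mul_le_mul_of_nonneg_right h2 (show (0:ℝ) ≤ s ^ 2 * t ^ 2 by positivity)]

lemma bsK_diff (a b : EuclideanSpace ℝ (Fin 2)) (ha : 0 < ‖a‖) (hb : 0 < ‖b‖) :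
    ‖biotSavartKernel a - biotSavartKernel b‖ ≤
      (2 * π)⁻¹ * (‖a - b‖ / ‖a‖ ^ 2 + ‖a - b‖ * (‖a‖ + ‖b‖) / (‖a‖ ^ 2 * ‖b‖)) := by
  have h1 : biotSavartKernel a - biotSavartKernel b
      = (2 * π)⁻¹ • ((‖a‖ ^ 2)⁻¹ • (bsPerp a - bsPerp b)
          + ((‖a‖ ^ 2)⁻¹ - (‖b‖ ^ 2)⁻¹) • bsPerp b) := by
    rw [bsK_def, bsK_def, mul_inv, mul_inv]
    module
  rw [h1, norm_smul, Real.norm_eq_abs, abs_of_pos (by positivity : (0:ℝ) < (2 * π)⁻¹)]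
  apply mul_le_mul_of_nonneg_left _ (by positivity)
  calc ‖(‖a‖ ^ 2)⁻¹ • (bsPerp a - bsPerp b) + ((‖a‖ ^ 2)⁻¹ - (‖b‖ ^ 2)⁻¹) • bsPerp b‖
      ≤ ‖(‖a‖ ^ 2)⁻¹ • (bsPerp a - bsPerp b)‖ + ‖((‖a‖ ^ 2)⁻¹ - (‖b‖ ^ 2)⁻¹) • bsPerp b‖ :=
        norm_add_le _ _
    _ = (‖a‖ ^ 2)⁻¹ * ‖a - b‖ + |(‖a‖ ^ 2)⁻¹ - (‖b‖ ^ 2)⁻¹| * ‖b‖ := by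
        rw [norm_smul, norm_smul, ← bsPerp_sub, bsPerp_norm, bsPerp_norm, Real.norm_eq_abs,
          Real.norm_eq_abs, abs_of_pos (by positivity : (0:ℝ) < (‖a‖ ^ 2)⁻¹)]
    _ ≤ ‖a - b‖ / ‖a‖ ^ 2 + ‖a - b‖ * (‖a‖ + ‖b‖) / (‖a‖ ^ 2 * ‖b‖) := by
        have := real_inv_sq_diff ‖a‖ ‖b‖ ‖a - b‖ ha hb (abs_norm_sub_norm_le a b)
        rw [inv_mul_eq_div]
        linarith

lemma bs_arith (R t s d : ℝ) (hR : 0 < R) (ht : 4 * R < t) (hd : d ≤ R) (hd0 : 0 ≤ d)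
    (hs1 : t - R ≤ s) (hs2 : s ≤ t + R) :
    d / s ^ 2 + d * (s + t) / (s ^ 2 * t) ≤ 6 * R / t ^ 2 := by
  have ht0 : 0 < t := by linarith
  have hs : 3 * t / 4 ≤ s := by linarith
  have hs0 : 0 < s := by linarith
  have hss : 9 * t ^ 2 / 16 ≤ s ^ 2 := by nlinarith
  have h1 : d / s ^ 2 ≤ 2 * R / t ^ 2 := by
    rw [div_le_div_iff₀ (by positivity) (by positivity)]
    nlinarith
  have h2 : d * (s + t) / (s ^ 2 * t) ≤ 4 * R / t ^ 2 := by
    rw [div_le_div_iff₀ (by positivity) (by positivity)]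
    nlinarith [mul_le_mul_of_nonneg_right
        (mul_le_mul hd (show s + t ≤ 9 * t / 4 by linarith) (by linarith) hR.le) (sq_nonneg t),
      mul_le_mul_of_nonneg_left hss (show (0:ℝ) ≤ 4 * R * t by positivity)]
  have h3 : 2 * R / t ^ 2 + 4 * R / t ^ 2 = 6 * R / t ^ 2 := by ring
  linarith

lemma bsK_norm_le (z : EuclideanSpace ℝ (Fin 2)) (r : ℝ) (hr : 0 < r) (hz : r ≤ ‖z‖) :
    ‖biotSavartKernel z‖ ≤ (2 * π * r)⁻¹ := by
  have hz0 : 0 < ‖z‖ := lt_of_lt_of_le hr hz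
  rw [bsK_norm, show (2 * π * ‖z‖ ^ 2)⁻¹ * ‖z‖ = (2 * π * ‖z‖)⁻¹ by
    field_simp]
  apply inv_anti₀ (by positivity)
  nlinarith [pi_pos]

/-- Far-field decay of the Biot–Savart velocity of a compactly supported, mean-zero
vorticity: `‖(K ∗ ω)(x)‖ ≤ C/‖x‖²` for `‖x‖ > 4R`. -/
theorem biotSavart_farfield_decay (R : ℝ) (hR : 0 < R)
    (ω : EuclideanSpace ℝ (Fin 2) → ℝ) (hL1 : Integrable ω volume)
    (hsupp : Function.support ω ⊆ Metric.closedBall 0 R)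
    (hmean : (∫ y, ω y) = 0) :
    ∃ C > 0, ∀ x : EuclideanSpace ℝ (Fin 2), 4 * R < ‖x‖ →
      ‖∫ y, ω y • biotSavartKernel (x - y)‖ ≤ C / ‖x‖ ^ 2 := by
  set I := ∫ y, ‖ω y‖ with hI
  have hI0 : 0 ≤ I := integral_nonneg fun y => norm_nonneg _
  refine ⟨3 * R / π * (I + 1), by positivity, ?_⟩
  intro x hx
  have ht0 : 0 < ‖x‖ := by linarith
  have hyR : ∀ y : EuclideanSpace ℝ (Fin 2), ω y ≠ 0 → ‖y‖ ≤ R := by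
    intro y hy
    have := hsupp (Function.mem_support.mpr hy)
    rwa [Metric.mem_closedBall, dist_zero_right] at this
  have hfar : ∀ y : EuclideanSpace ℝ (Fin 2), ω y ≠ 0 → 3 * ‖x‖ / 4 ≤ ‖x - y‖ := by
    intro y hy
    have h1 := norm_sub_norm_le x y
    have h2 := hyR y hy
    linarith
  have hM : Integrable (fun y => ω y • biotSavartKernel (x - y)) := by
    apply Integrable.mono' (hL1.norm.const_mul ((2 * π * (3 * ‖x‖ / 4))⁻¹))
    · exact hL1.aestronglyMeasurable.smul
        ((bsK_meas.comp (measurable_const.sub measurable_id)).aestronglyMeasurable)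
    · filter_upwards with y
      rw [norm_smul]
      by_cases h : ω y = 0
      · simp [h]
      · rw [mul_comm]
        exact mul_le_mul_of_nonneg_right
          (bsK_norm_le _ _ (by positivity) (hfar y h)) (norm_nonneg _)
  have hK0 : Integrable (fun y => ω y • biotSavartKernel x) := hL1.smul_const _
  have hzero : ∫ y, ω y • biotSavartKernel x = 0 := by
    rw [integral_smul_const, hmean, zero_smul]
  have heq : ∫ y, ω y • biotSavartKernel (x - y)
      = ∫ y, ω y • (biotSavartKernel (x - y) - biotSavartKernel x) := by
    simp only [smul_sub]
    rw [integral_sub hM hK0, hzero, sub_zero]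
  have hpt : ∀ y, ‖ω y • (biotSavartKernel (x - y) - biotSavartKernel x)‖
      ≤ ‖ω y‖ * (3 * R / π / ‖x‖ ^ 2) := by
    intro y
    rw [norm_smul]
    by_cases h : ω y = 0
    · simp [h]
    · apply mul_le_mul_of_nonneg_left _ (norm_nonneg _)
      have ha0 : 0 < ‖x - y‖ := lt_of_lt_of_le (by positivity) (hfar y h)
      have hD := bsK_diff (x - y) x ha0 ht0
      rw [show x - y - x = -y by abel, norm_neg] at hD
      apply hD.trans
      have harith := bs_arith R ‖x‖ ‖x - y‖ ‖y‖ hR hx (hyR y h) (norm_nonneg _)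
        (by have := norm_sub_norm_le x y; linarith [hyR y h])
        ((norm_sub_le x y).trans (by linarith [hyR y h]))
      calc (2 * π)⁻¹ * (‖y‖ / ‖x - y‖ ^ 2 + ‖y‖ * (‖x - y‖ + ‖x‖) / (‖x - y‖ ^ 2 * ‖x‖))
          ≤ (2 * π)⁻¹ * (6 * R / ‖x‖ ^ 2) := by
            exact mul_le_mul_of_nonneg_left harith (by positivity)
        _ = 3 * R / π / ‖x‖ ^ 2 := by
            field_simp
            ring
  rw [heq]
  calc ‖∫ y, ω y • (biotSavartKernel (x - y) - biotSavartKernel x)‖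
      ≤ ∫ y, ‖ω y • (biotSavartKernel (x - y) - biotSavartKernel x)‖ :=
        norm_integral_le_integral_norm _
    _ ≤ ∫ y, ‖ω y‖ * (3 * R / π / ‖x‖ ^ 2) := by
        refine integral_mono ?_ (hL1.norm.mul_const _) hpt
        have := (hM.sub hK0).norm
        simpa [smul_sub] using this
    _ = I * (3 * R / π / ‖x‖ ^ 2) := by rw [integral_mul_const]
    _ = (3 * R / π * I) / ‖x‖ ^ 2 := by ring
    _ ≤ 3 * R / π * (I + 1) / ‖x‖ ^ 2 := by
        gcongr
        linarith
end
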